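/- Let h_t have the mixture EGG distribution with parameters α ∈ [0,1], β, a, b, c > 0, let h_p be independent of h_t with pointing-error density f(h) = μ² A₀^{−μ²} h^{μ²−1} on (0, A₀] (μ, A₀ > 0), and let h_a > 0 be a constant. Then the product h₁ = h_a·h_t·h_p satisfies, for every s > 0, E[h₁^s] = (A₀ h_a)^s·(μ²/(μ²+s))·[α β^s Γ(1+s) + (1−α) b^s Γ(a+s/c)/Γ(a)]. -/

import Mathlib

open MeasureTheory ProbabilityTheory Real

lemma aux_integrableOn_rpow_exp {p q b : ℝ} (hp : 0 < p) (hq : -1 < q) (hb : 0 < b) :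
    IntegrableOn (fun x : ℝ => x ^ q * Real.exp (-b * x ^ p)) (Set.Ioi 0) := by
  have base : IntegrableOn (fun y : ℝ => y ^ ((q + 1) / p - 1) * Real.exp (-b * y))
      (Set.Ioi 0) := by
    have h0 : 0 < (q + 1) / p := div_pos (by linarith) hp
    have := integrableOn_rpow_mul_exp_neg_mul_rpow (p := 1) (s := (q + 1) / p - 1) (b := b)
      (by linarith) one_pos hb
    exact this.congr_fun (fun x hx => by dsimp only; rw [Real.rpow_one]) measurableSet_Ioi
  have h := (integrableOn_Ioi_comp_rpow_iff'
    (fun y => y ^ ((q + 1) / p - 1) * Real.exp (-b * y)) hp.ne').mpr base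
  refine h.congr_fun (fun x hx => ?_) measurableSet_Ioi
  have hx0 : (0 : ℝ) < x := hx
  have h1 : ((x : ℝ) ^ p) ^ ((q + 1) / p - 1) = x ^ (p * ((q + 1) / p - 1)) :=
    (Real.rpow_mul hx0.le _ _).symm
  dsimp only
  rw [smul_eq_mul, h1, ← mul_assoc, ← Real.rpow_add hx0]
  have : p - 1 + p * ((q + 1) / p - 1) = q := by field_simp; ring
  rw [this]

lemma aux_integral_withDensity (g : ℝ → ℝ) (hg : Measurable g) (hg0 : ∀ x, 0 ≤ g x) (r : ℝ) :
    ∫ x : ℝ, x ^ r ∂(volume.withDensity fun x => ENNReal.ofReal (g x)) =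
      ∫ x : ℝ, g x * x ^ r := by
  have h1 : ∫ x : ℝ, x ^ r ∂(volume.withDensity fun x => ENNReal.ofReal (g x)) =
      ∫ x : ℝ, (g x).toNNReal • x ^ r :=
    integral_withDensity_eq_integral_smul
      (by fun_prop : Measurable fun x => (g x).toNNReal) _
  rw [h1]
  refine integral_congr_ae (Filter.Eventually.of_forall fun x => ?_)
  simp [NNReal.smul_def, Real.coe_toNNReal _ (hg0 x)]

lemma aux_moment {Ω : Type*} [MeasureSpace Ω] [IsProbabilityMeasure (ℙ : Measure Ω)]
    (X : Ω → ℝ) (hX : Measurable X)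
    (g : ℝ → ℝ) (hg : Measurable g) (hg0 : ∀ x, 0 ≤ g x) (r : ℝ)
    (hlaw : Measure.map X ℙ = volume.withDensity fun x => ENNReal.ofReal (g x))
    (hint : Integrable fun x => g x * x ^ r) :
    Integrable (fun ω => X ω ^ r) (ℙ : Measure Ω) ∧
      ∫ ω, X ω ^ r ∂(ℙ : Measure Ω) = ∫ x : ℝ, g x * x ^ r := by
  have hmeas : Measurable fun x : ℝ => x ^ r := by fun_prop
  have hm : Integrable (fun x : ℝ => x ^ r) (Measure.map X ℙ) := by
    rw [hlaw, integrable_withDensity_iff (by fun_prop)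
      (Filter.Eventually.of_forall fun x => ENNReal.ofReal_lt_top)]
    exact hint.congr (Filter.Eventually.of_forall fun x => by
      simp only [ENNReal.toReal_ofReal (hg0 x)]; ring)
  constructor
  · exact (integrable_map_measure hmeas.aestronglyMeasurable hX.aemeasurable).mp hm
  · rw [← integral_map hX.aemeasurable hmeas.aestronglyMeasurable, hlaw,
      aux_integral_withDensity g hg hg0 r]

/-- Moments of the composite gain h₁ = h_a·h_t·h_p with independent mixture-EGG turbulence h_t
and pointing loss h_p: for s > 0,
E[h₁^s] = (A₀h_a)^s·(μ²/(μ²+s))·[αβ^sΓ(1+s) + (1−α)b^sΓ(a+s/c)/Γ(a)]. -/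
theorem stmt_9 {Ω : Type*} [MeasureSpace Ω] [IsProbabilityMeasure (ℙ : Measure Ω)]
    (ht hp : Ω → ℝ) (htm : Measurable ht) (hpm : Measurable hp)
    (α β a b c μ A₀ ha : ℝ) (hα0 : 0 ≤ α) (hα1 : α ≤ 1)
    (hβ : 0 < β) (ha' : 0 < a) (hb : 0 < b) (hc : 0 < c)
    (hμ : 0 < μ) (hA : 0 < A₀) (hha : 0 < ha)
    (hindep : IndepFun ht hp ℙ)
    (hdt : Measure.map ht ℙ = volume.withDensity (fun x => ENNReal.ofReal
        (if 0 < x then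
          α / β * Real.exp (-x / β) +
            (1 - α) * (c * x ^ (a * c - 1) / (b ^ (a * c) * Real.Gamma a)) *
              Real.exp (-(x / b) ^ c)
        else 0)))
    (hdp : Measure.map hp ℙ = volume.withDensity (fun h => ENNReal.ofReal
        (if 0 < h ∧ h ≤ A₀ then μ ^ 2 / A₀ ^ (μ ^ 2) * h ^ (μ ^ 2 - 1) else 0)))
    (s : ℝ) (hs : 0 < s) :
    ∫ ω, (ha * ht ω * hp ω) ^ s ∂(ℙ : Measure Ω) =
      (A₀ * ha) ^ s * (μ ^ 2 / (μ ^ 2 + s)) *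
        (α * β ^ s * Real.Gamma (1 + s) +
          (1 - α) * b ^ s * Real.Gamma (a + s / c) / Real.Gamma a) := by
  have hGa : 0 < Real.Gamma a := Real.Gamma_pos_of_pos ha'
  set gt : ℝ → ℝ := fun x =>
    if 0 < x then
      α / β * Real.exp (-x / β) +
        (1 - α) * (c * x ^ (a * c - 1) / (b ^ (a * c) * Real.Gamma a)) *
          Real.exp (-(x / b) ^ c)
    else 0 with hgt_def
  set gp : ℝ → ℝ := fun h =>
    if 0 < h ∧ h ≤ A₀ then μ ^ 2 / A₀ ^ (μ ^ 2) * h ^ (μ ^ 2 - 1) else 0 with hgp_def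
  -- measurability of the densities
  have hgt_meas : Measurable gt := by
    apply Measurable.ite (measurableSet_lt measurable_const measurable_id) _ measurable_const
    fun_prop
  have hgp_meas : Measurable gp := by
    apply Measurable.ite _ _ measurable_const
    · exact (measurableSet_lt measurable_const measurable_id).inter
        (measurableSet_le measurable_id measurable_const)
    · fun_prop
  -- nonnegativity of the densities
  have hgt0 : ∀ x, 0 ≤ gt x := by
    intro x
    rw [hgt_def]
    dsimp only
    split_ifs with hx
    · have h1 : 0 ≤ α / β * Real.exp (-x / β) :=
        mul_nonneg (div_nonneg hα0 hβ.le) (Real.exp_pos _).le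
      have h2 : 0 ≤ (1 - α) * (c * x ^ (a * c - 1) / (b ^ (a * c) * Real.Gamma a)) *
          Real.exp (-(x / b) ^ c) := by
        refine mul_nonneg (mul_nonneg (by linarith) (div_nonneg
          (mul_nonneg hc.le (Real.rpow_nonneg hx.le _))
          (mul_nonneg (Real.rpow_pos_of_pos hb _).le hGa.le))) (Real.exp_pos _).le
      linarith
    · exact le_rfl

  have hgp0 : ∀ x, 0 ≤ gp x := by
    intro x
    rw [hgp_def]
    dsimp only
    split_ifs with hx
    · exact mul_nonneg (div_nonneg (by positivity) (Real.rpow_pos_of_pos hA _).le)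
        (Real.rpow_nonneg hx.1.le _)
    · exact le_rfl
  -- constants
  have hGa' : Real.Gamma a ≠ 0 := hGa.ne'
  have hbc : (0 : ℝ) < b ^ c := Real.rpow_pos_of_pos hb c
  have hbac : (0 : ℝ) < b ^ (a * c) := Real.rpow_pos_of_pos hb _
  have hμ2 : (0 : ℝ) < μ ^ 2 := pow_pos hμ 2
  have hq2 : (-1 : ℝ) < s + (a * c - 1) := by nlinarith [mul_pos ha' hc]
  have hq3 : (-1 : ℝ) < s + (μ ^ 2 - 1) := by nlinarith
  set K : ℝ := (1 - α) * c / (b ^ (a * c) * Real.Gamma a) with hK_def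
  -- pointwise identity for the turbulence integrand on (0, ∞)
  have eqt : Set.EqOn (fun x => gt x * x ^ s)
      (fun x => α / β * (x ^ s * Real.exp (-β⁻¹ * x ^ (1 : ℝ))) +
        K * (x ^ (s + (a * c - 1)) * Real.exp (-(b ^ c)⁻¹ * x ^ c))) (Set.Ioi 0) := by
    intro x hx
    have hx0 : (0 : ℝ) < x := hx
    have e1 : Real.exp (-β⁻¹ * x ^ (1 : ℝ)) = Real.exp (-x / β) := by
      rw [Real.rpow_one]; congr 1; field_simp
    have e2 : Real.exp (-(b ^ c)⁻¹ * x ^ c) = Real.exp (-(x / b) ^ c) := by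
      congr 1
      rw [Real.div_rpow hx0.le hb.le]
      field_simp
    simp only [hgt_def, if_pos hx0]
    rw [e1, e2, Real.rpow_add hx0, hK_def]
    ring
  have intt1 : IntegrableOn (fun x => α / β * (x ^ s * Real.exp (-β⁻¹ * x ^ (1 : ℝ))))
      (Set.Ioi 0) :=
    (aux_integrableOn_rpow_exp one_pos (by linarith) (inv_pos.mpr hβ)).const_mul _
  have intt2 : IntegrableOn (fun x => K * (x ^ (s + (a * c - 1)) *
      Real.exp (-(b ^ c)⁻¹ * x ^ c))) (Set.Ioi 0) :=
    (aux_integrableOn_rpow_exp hc hq2 (inv_pos.mpr hbc)).const_mul _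
  have hzt : ∀ x ∉ Set.Ioi (0 : ℝ), gt x * x ^ s = 0 := by
    intro x hx
    have : ¬ (0 < x) := by simpa using hx
    simp [hgt_def, this]
  -- value of the turbulence moment
  have Tt : ∫ x : ℝ, gt x * x ^ s = α * β ^ s * Real.Gamma (1 + s) +
      (1 - α) * b ^ s * Real.Gamma (a + s / c) / Real.Gamma a := by
    rw [← setIntegral_eq_integral_of_forall_compl_eq_zero hzt,
      setIntegral_congr_fun measurableSet_Ioi eqt, integral_add intt1 intt2,
      integral_const_mul, integral_const_mul,
      integral_rpow_mul_exp_neg_mul_rpow one_pos (by linarith) (inv_pos.mpr hβ),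
      integral_rpow_mul_exp_neg_mul_rpow hc hq2 (inv_pos.mpr hbc)]
    have hβs : (β⁻¹ : ℝ) ^ (-(s + 1) / 1) = β ^ s * β := by
      rw [div_one, Real.inv_rpow hβ.le, Real.rpow_neg hβ.le, inv_inv, Real.rpow_add hβ,
        Real.rpow_one]
    have hbs : ((b ^ c)⁻¹ : ℝ) ^ (-(s + (a * c - 1) + 1) / c) = b ^ s * b ^ (a * c) := by
      rw [show -(s + (a * c - 1) + 1) / c = -((s + a * c) / c) by ring,
        Real.inv_rpow hbc.le, Real.rpow_neg hbc.le, inv_inv, ← Real.rpow_mul hb.le,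
        show c * ((s + a * c) / c) = s + a * c by field_simp, Real.rpow_add hb]
    rw [hβs, hbs, show (s + 1) / 1 = 1 + s by ring,
      show (s + (a * c - 1) + 1) / c = a + s / c by field_simp; ring, hK_def]
    field_simp
  -- pointwise identity for the pointing integrand on (0, A₀]
  have eqp : Set.EqOn (fun x => gp x * x ^ s)
      (fun x => μ ^ 2 / A₀ ^ (μ ^ 2) * x ^ (s + (μ ^ 2 - 1))) (Set.Ioc 0 A₀) := by
    intro x hx
    simp only [hgp_def, if_pos (show 0 < x ∧ x ≤ A₀ from hx)]
    rw [Real.rpow_add hx.1]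
    ring
  have intp : IntegrableOn (fun x : ℝ => μ ^ 2 / A₀ ^ (μ ^ 2) * x ^ (s + (μ ^ 2 - 1)))
      (Set.Ioc 0 A₀) :=
    ((intervalIntegral.intervalIntegrable_rpow' hq3 (a := 0) (b := A₀)).1).const_mul _
  have hzp : ∀ x ∉ Set.Ioc (0 : ℝ) A₀, gp x * x ^ s = 0 := by
    intro x hx
    have : ¬ (0 < x ∧ x ≤ A₀) := by simpa [Set.mem_Ioc] using hx
    simp [hgp_def, this]
  have Tp : ∫ x : ℝ, gp x * x ^ s = A₀ ^ s * (μ ^ 2 / (μ ^ 2 + s)) := by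
    rw [← setIntegral_eq_integral_of_forall_compl_eq_zero hzp,
      setIntegral_congr_fun measurableSet_Ioc eqp, ← intervalIntegral.integral_of_le hA.le,
      intervalIntegral.integral_const_mul, integral_rpow (Or.inl hq3),
      show s + (μ ^ 2 - 1) + 1 = s + μ ^ 2 by ring, Real.zero_rpow (by positivity),
      Real.rpow_add hA]
    have hA2 : (0 : ℝ) < A₀ ^ (μ ^ 2) := Real.rpow_pos_of_pos hA _
    field_simp
    ring
  -- integrability over the whole line
  have hintt : Integrable (fun x => gt x * x ^ s) := by
    have : (fun x => gt x * x ^ s) =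
        Set.indicator (Set.Ioi 0) (fun x => gt x * x ^ s) := by
      ext x
      by_cases hx : x ∈ Set.Ioi (0 : ℝ)
      · rw [Set.indicator_of_mem hx]
      · rw [Set.indicator_of_notMem hx, hzt x hx]
    rw [this, integrable_indicator_iff measurableSet_Ioi]
    have hsum : IntegrableOn
        (fun x => α / β * (x ^ s * Real.exp (-β⁻¹ * x ^ (1 : ℝ))) +
          K * (x ^ (s + (a * c - 1)) * Real.exp (-(b ^ c)⁻¹ * x ^ c))) (Set.Ioi 0) :=
      intt1.add intt2
    exact hsum.congr_fun eqt.symm measurableSet_Ioi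
  have hintp : Integrable (fun x => gp x * x ^ s) := by
    have : (fun x => gp x * x ^ s) =
        Set.indicator (Set.Ioc 0 A₀) (fun x => gp x * x ^ s) := by
      ext x
      by_cases hx : x ∈ Set.Ioc (0 : ℝ) A₀
      · rw [Set.indicator_of_mem hx]
      · rw [Set.indicator_of_notMem hx, hzp x hx]
    rw [this, integrable_indicator_iff measurableSet_Ioc]
    exact intp.congr_fun eqp.symm measurableSet_Ioc
  -- moments
  obtain ⟨hti, htv⟩ := aux_moment ht htm gt hgt_meas hgt0 s hdt hintt
  obtain ⟨hpi, hpv⟩ := aux_moment hp hpm gp hgp_meas hgp0 s hdp hintp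
  -- a.e. positivity
  have haet : ∀ᵐ ω ∂(ℙ : Measure Ω), 0 < ht ω := by
    have h0 : (ℙ : Measure Ω) (ht ⁻¹' Set.Iic 0) = 0 := by
      rw [← Measure.map_apply htm measurableSet_Iic, hdt,
        withDensity_apply _ measurableSet_Iic,
        setLIntegral_congr_fun_ae measurableSet_Iic
          (show ∀ᵐ x : ℝ ∂volume, x ∈ Set.Iic (0 : ℝ) →
              ENNReal.ofReal (gt x) = (fun _ => (0 : ENNReal)) x from
            Filter.Eventually.of_forall fun x hx => by
              have hx' : ¬ (0 < x) := not_lt.mpr hx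
              simp [hgt_def, hx']),
        lintegral_zero]
    rw [ae_iff]
    have hset : {ω | ¬ 0 < ht ω} = ht ⁻¹' Set.Iic 0 := by
      ext ω; simp [not_lt]
    rw [hset]
    exact h0
  have haep : ∀ᵐ ω ∂(ℙ : Measure Ω), 0 < hp ω := by
    have h0 : (ℙ : Measure Ω) (hp ⁻¹' Set.Iic 0) = 0 := by
      rw [← Measure.map_apply hpm measurableSet_Iic, hdp,
        withDensity_apply _ measurableSet_Iic,
        setLIntegral_congr_fun_ae measurableSet_Iic
          (show ∀ᵐ x : ℝ ∂volume, x ∈ Set.Iic (0 : ℝ) →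
              ENNReal.ofReal (gp x) = (fun _ => (0 : ENNReal)) x from
            Filter.Eventually.of_forall fun x hx => by
              have hx' : ¬ (0 < x) := not_lt.mpr hx
              have hx2 : ¬ (0 < x ∧ x ≤ A₀) := fun h => hx' h.1
              simp [hgp_def, hx2]),
        lintegral_zero]
    rw [ae_iff]
    have hset : {ω | ¬ 0 < hp ω} = hp ⁻¹' Set.Iic 0 := by
      ext ω; simp [not_lt]
    rw [hset]
    exact h0
  -- put everything together
  have hrw : ∀ᵐ ω ∂(ℙ : Measure Ω),
      (ha * ht ω * hp ω) ^ s = ha ^ s * (ht ω ^ s * hp ω ^ s) := by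
    filter_upwards [haet, haep] with ω h1 h2
    rw [Real.mul_rpow (mul_nonneg hha.le h1.le) h2.le, Real.mul_rpow hha.le h1.le, mul_assoc]
  have hind2 : IndepFun (fun ω => ht ω ^ s) (fun ω => hp ω ^ s) ℙ :=
    hindep.comp (by fun_prop : Measurable fun x : ℝ => x ^ s)
      (by fun_prop : Measurable fun x : ℝ => x ^ s)
  have hsplit : ∫ ω, ht ω ^ s * hp ω ^ s ∂(ℙ : Measure Ω) =
      (∫ ω, ht ω ^ s ∂(ℙ : Measure Ω)) * ∫ ω, hp ω ^ s ∂(ℙ : Measure Ω) :=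
    IndepFun.integral_mul_eq_mul_integral hind2 hti.1 hpi.1
  rw [integral_congr_ae hrw, integral_const_mul, hsplit, htv, hpv, Tt, Tp,
    Real.mul_rpow hA.le hha.le]
  ring
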